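/- Let V be a finite-dimensional complex vector space, let N be a nilpotent linear endomorphism of V, let T be a bijective linear endomorphism of V belonging to Alg Lat(N)', and let M be a hyperinvariant subspace of N. Then T maps the interval [M, N⁻¹(M)] onto itself: the set of images {T P : P a subspace with M ⊆ P ⊆ N⁻¹(M)} equals the set {P : M ⊆ P ⊆ N⁻¹(M)}, where N⁻¹(M) denotes the preimage of M under N. -/
import Mathlib


open Submodule

/-- A subspace `M` is invariant under the endomorphism `A`. -/
def InvSub {V : Type*} [AddCommGroup V] [Module ℂ V] (A : V →ₗ[ℂ] V)
    (M : Submodule ℂ V) : Prop :=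
  M.map A ≤ M

/-- `T ∈ Col(A)`: `T` is bijective and a subspace is `A`-invariant iff its image
under `T` is `A`-invariant. -/
def Col {V : Type*} [AddCommGroup V] [Module ℂ V] (A T : V →ₗ[ℂ] V) : Prop :=
  Function.Bijective T ∧ ∀ M : Submodule ℂ V, InvSub A M ↔ InvSub A (M.map T)

/-- The cyclic subspace `(A)_x`, i.e. the span of `{A^n x : n ≥ 0}`. -/
def cyc {V : Type*} [AddCommGroup V] [Module ℂ V] (A : V →ₗ[ℂ] V) (x : V) :
    Submodule ℂ V :=
  Submodule.span ℂ (Set.range fun n : ℕ => (A ^ n) x)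

/-- `M` is a hyperinvariant subspace of `N`: it is invariant under every
endomorphism commuting with `N`. -/
def Hyp {V : Type*} [AddCommGroup V] [Module ℂ V] (N : V →ₗ[ℂ] V)
    (M : Submodule ℂ V) : Prop :=
  ∀ B : V →ₗ[ℂ] V, B ∘ₗ N = N ∘ₗ B → M.map B ≤ M

theorem stmt16 {V : Type*} [AddCommGroup V] [Module ℂ V] [FiniteDimensional ℂ V]
    (N T : V →ₗ[ℂ] V) (hN : IsNilpotent N) (hT : Function.Bijective T)
    (hTAlg : ∀ M : Submodule ℂ V, Hyp N M → M.map T ≤ M)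
    (M : Submodule ℂ V) (hM : Hyp N M) :
    {Q : Submodule ℂ V | ∃ P : Submodule ℂ V, M ≤ P ∧ P ≤ M.comap N ∧ Q = P.map T} =
      {P : Submodule ℂ V | M ≤ P ∧ P ≤ M.comap N} := by
  -- map T of a hyperinvariant subspace equals itself
  have key : ∀ W : Submodule ℂ V, Hyp N W → W.map T = W := by
    intro W hW
    have hle := hTAlg W hW
    have hfr : Module.finrank ℂ (W.map T) = Module.finrank ℂ W :=
      (Submodule.equivMapOfInjective T hT.injective W).finrank_eq.symm
    exact Submodule.eq_of_le_of_finrank_le hle (le_of_eq hfr.symm)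
  -- comap N M is hyperinvariant
  have hMc : Hyp N (M.comap N) := by
    intro B hB x hx
    obtain ⟨y, hy, rfl⟩ := hx
    simp only [Submodule.mem_comap] at hy ⊢
    have : N (B y) = B (N y) := by
      have := congrFun (congrArg DFunLike.coe hB) y
      simpa using this.symm
    rw [this]
    exact hM B hB ⟨N y, hy, rfl⟩
  have hTM : M.map T = M := key M hM
  have hTMc : (M.comap N).map T = M.comap N := key _ hMc
  ext Q
  simp only [Set.mem_setOf_eq]
  constructor
  · rintro ⟨P, hMP, hPc, rfl⟩
    constructor
    · rw [← hTM]; exact Submodule.map_mono hMP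
    · rw [← hTMc]; exact Submodule.map_mono hPc
  · rintro ⟨hMQ, hQc⟩
    refine ⟨Q.comap T, ?_, ?_, (Submodule.map_comap_eq_of_surjective hT.surjective Q).symm⟩
    · rw [← Submodule.map_le_iff_le_comap, hTM]; exact hMQ
    · calc Q.comap T ≤ (M.comap N).comap T := Submodule.comap_mono hQc
        _ = ((M.comap N).map T).comap T := by rw [hTMc]
        _ = M.comap N := Submodule.comap_map_eq_of_injective hT.injective _
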